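/- Let k ≥ 2 be an integer, let V_k be the set of quadruples ξ = (ξ₁,ξ₂,ξ₃,ξ₄) of nonzero elements of ZMod k with ξ₁+ξ₂+ξ₃+ξ₄ = 0, and let a be the integer matrix indexed by V_k with a(ξ,ξ') = k-2 if ξ₁ + ξ'₃ = 0 and a(ξ,ξ') = -1 otherwise. Then for every integer i ≥ 1, Tr[a^i] = (k-2)·(k-1)^i. -/
import Mathlib

/-- The set of allowed vertex configurations: quadruples of nonzero edge states
in `ZMod k` summing to zero. -/
abbrev VertexConfig (k : ℕ) : Type :=
  {ξ : ZMod k × ZMod k × ZMod k × ZMod k //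
    ξ.1 ≠ 0 ∧ ξ.2.1 ≠ 0 ∧ ξ.2.2.1 ≠ 0 ∧ ξ.2.2.2 ≠ 0 ∧
    ξ.1 + ξ.2.1 + ξ.2.2.1 + ξ.2.2.2 = 0}

/-- The normalized compatibility matrix: entry `k - 2` when configurations
`ξ, ξ'` are compatible (i.e. `ξ₁ + ξ'₃ = 0`), and `-1` otherwise. -/
def compatMat (k : ℕ) : Matrix (VertexConfig k) (VertexConfig k) ℤ :=
  Matrix.of fun ξ ξ' => if ξ.val.1 + ξ'.val.2.2.1 = 0 then (k : ℤ) - 2 else -1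


open Finset

section helpers
variable {α : Type*} [DecidableEq α]

lemma sum_one_special (s : Finset α) (t : α) (ht : t ∈ s) (A B : ℤ) :
    ∑ x ∈ s, (if x = t then A else B) = A + ((s.card : ℤ) - 1) * B := by
  have h : ∀ x ∈ s, (if x = t then A else B) = B + (if x = t then A - B else 0) := by
    intro x _; split <;> ring
  rw [Finset.sum_congr rfl h, Finset.sum_add_distrib, Finset.sum_const,
    Finset.sum_ite_eq' s t (fun _ => A - B), if_pos ht]
  push_cast; ring

lemma sum_two_special (s : Finset α) (t₁ t₂ : α) (ht₁ : t₁ ∈ s) (ht₂ : t₂ ∈ s)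
    (hne : t₁ ≠ t₂) (A B C : ℤ) :
    ∑ x ∈ s, (if x = t₁ then A else if x = t₂ then B else C)
      = A + B + ((s.card : ℤ) - 2) * C := by
  have h : ∀ x ∈ s, (if x = t₁ then A else if x = t₂ then B else C)
      = C + (if x = t₁ then A - C else 0) + (if x = t₂ then B - C else 0) := by
    intro x _
    by_cases h1 : x = t₁
    · subst h1; rw [if_pos rfl, if_pos rfl, if_neg hne]; ring
    · rw [if_neg h1, if_neg h1]
      by_cases h2 : x = t₂
      · subst h2; rw [if_pos rfl, if_pos rfl]; ring
      · rw [if_neg h2, if_neg h2]; ring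
  rw [Finset.sum_congr rfl h, Finset.sum_add_distrib, Finset.sum_add_distrib,
    Finset.sum_const, Finset.sum_ite_eq' s t₁ (fun _ => A - C), if_pos ht₁,
    Finset.sum_ite_eq' s t₂ (fun _ => B - C), if_pos ht₂]
  push_cast; ring

end helpers

lemma card_erase_zero (k : ℕ) [NeZero k] :
    ((Finset.univ.erase (0 : ZMod k)).card : ℤ) = (k : ℤ) - 1 := by
  rw [Finset.card_erase_of_mem (Finset.mem_univ _), Finset.card_univ, ZMod.card]
  have : 1 ≤ k := Nat.one_le_iff_ne_zero.mpr (NeZero.ne k)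
  push_cast [this]; ring

lemma sum_V (k : ℕ) [NeZero k] (hk : 2 ≤ k) (h : ZMod k → ZMod k → ℤ) :
    ∑ ξ : VertexConfig k, h ξ.val.1 ξ.val.2.2.1
      = ∑ u ∈ Finset.univ.erase (0 : ZMod k), ∑ v ∈ Finset.univ.erase (0 : ZMod k),
          (if u + v = 0 then (k : ℤ) - 1 else (k : ℤ) - 2) * h u v := by
  classical
  have hsub := Finset.sum_subtype
    (p := fun x : ZMod k × ZMod k × ZMod k × ZMod k =>
      x.1 ≠ 0 ∧ x.2.1 ≠ 0 ∧ x.2.2.1 ≠ 0 ∧ x.2.2.2 ≠ 0 ∧ x.1 + x.2.1 + x.2.2.1 + x.2.2.2 = 0)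
    (F := inferInstanceAs (Fintype (VertexConfig k)))
    (Finset.univ.filter (fun x : ZMod k × ZMod k × ZMod k × ZMod k =>
      x.1 ≠ 0 ∧ x.2.1 ≠ 0 ∧ x.2.2.1 ≠ 0 ∧ x.2.2.2 ≠ 0 ∧ x.1 + x.2.1 + x.2.2.1 + x.2.2.2 = 0))
    (by intro x; simp) (fun x => h x.1 x.2.2.1)
  rw [← hsub, Finset.sum_filter]
  simp only [Fintype.sum_prod_type]
  -- collapse the d-sum
  have step1 : ∀ a b c : ZMod k,
      (∑ d : ZMod k, if (a ≠ 0 ∧ b ≠ 0 ∧ c ≠ 0 ∧ d ≠ 0 ∧ a + b + c + d = 0)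
          then h a c else 0)
      = (if (a ≠ 0 ∧ b ≠ 0 ∧ c ≠ 0 ∧ a + b + c ≠ 0) then h a c else 0) := by
    intro a b c
    have hpt : ∀ d : ZMod k,
        (if (a ≠ 0 ∧ b ≠ 0 ∧ c ≠ 0 ∧ d ≠ 0 ∧ a + b + c + d = 0) then h a c else 0)
        = if d = -(a + b + c)
            then (if (a ≠ 0 ∧ b ≠ 0 ∧ c ≠ 0 ∧ a + b + c ≠ 0) then h a c else 0) else 0 := by
      intro d
      by_cases hd : d = -(a + b + c)
      · subst hd
        rw [if_pos rfl]
        apply if_congr _ rfl rfl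
        constructor
        · rintro ⟨h1, h2, h3, h4, -⟩
          exact ⟨h1, h2, h3, fun hz => h4 (by rw [hz, neg_zero])⟩
        · rintro ⟨h1, h2, h3, h4⟩
          exact ⟨h1, h2, h3, neg_ne_zero.mpr h4, by ring⟩
      · rw [if_neg hd, if_neg]
        rintro ⟨-, -, -, -, hsum⟩
        exact hd (eq_neg_of_add_eq_zero_right hsum)
    rw [Finset.sum_congr rfl (fun d _ => hpt d),
      Finset.sum_ite_eq' Finset.univ (-(a + b + c)), if_pos (Finset.mem_univ _)]
  simp only [step1]
  -- swap the b and c sums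
  have hswap : ∀ a : ZMod k,
      (∑ b : ZMod k, ∑ c : ZMod k,
        if (a ≠ 0 ∧ b ≠ 0 ∧ c ≠ 0 ∧ a + b + c ≠ 0) then h a c else 0)
      = ∑ c : ZMod k, ∑ b : ZMod k,
        if (a ≠ 0 ∧ b ≠ 0 ∧ c ≠ 0 ∧ a + b + c ≠ 0) then h a c else 0 := by
    intro a; rw [Finset.sum_comm]
  simp only [hswap]
  -- collapse the b-sum into a count
  have step2 : ∀ a c : ZMod k,
      (∑ b : ZMod k, if (a ≠ 0 ∧ b ≠ 0 ∧ c ≠ 0 ∧ a + b + c ≠ 0) then h a c else 0)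
      = if (a ≠ 0 ∧ c ≠ 0)
          then (if a + c = 0 then (k : ℤ) - 1 else (k : ℤ) - 2) * h a c else 0 := by
    intro a c
    by_cases hac : a ≠ 0 ∧ c ≠ 0
    · rw [if_pos hac]
      obtain ⟨ha, hc⟩ := hac
      have hpt : ∀ b : ZMod k,
          (if (a ≠ 0 ∧ b ≠ 0 ∧ c ≠ 0 ∧ a + b + c ≠ 0) then h a c else 0)
          = if (b ≠ 0 ∧ b ≠ -(a + c)) then h a c else 0 := by
        intro b
        apply if_congr _ rfl rfl
        constructor
        · rintro ⟨-, h2, -, h4⟩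
          exact ⟨h2, fun hb => h4 (by rw [hb]; ring)⟩
        · rintro ⟨h2, h4⟩
          exact ⟨ha, h2, hc, fun hz => h4 (by linear_combination hz)⟩
      rw [Finset.sum_congr rfl (fun b _ => hpt b), ← Finset.sum_filter,
        Finset.sum_const, nsmul_eq_mul]
      congr 1
      by_cases hs : a + c = 0
      · rw [if_pos hs]
        have : (Finset.univ.filter (fun b : ZMod k => b ≠ 0 ∧ b ≠ -(a + c)))
            = Finset.univ.erase 0 := by
          ext b
          simp [hs]
        rw [this, card_erase_zero]
      · rw [if_neg hs]
        have ht : -(a + c) ≠ 0 := neg_ne_zero.mpr hs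
        have : (Finset.univ.filter (fun b : ZMod k => b ≠ 0 ∧ b ≠ -(a + c)))
            = (Finset.univ.erase (0 : ZMod k)).erase (-(a + c)) := by
          ext b
          simp [and_comm]
        rw [this, Finset.card_erase_of_mem (Finset.mem_erase.mpr ⟨ht, Finset.mem_univ _⟩),
          Finset.card_erase_of_mem (Finset.mem_univ _), Finset.card_univ, ZMod.card]
        omega
    · rw [if_neg hac]
      apply Finset.sum_eq_zero
      intro b _
      rw [if_neg]
      rintro ⟨h1, -, h3, -⟩
      exact hac ⟨h1, h3⟩
  simp only [step2]
  -- convert the erased sums on the RHS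
  simp only [← Finset.filter_ne', Finset.sum_filter]
  apply Finset.sum_congr rfl
  intro a _
  by_cases ha : a = 0 <;> simp [ha]

lemma mem_E {k : ℕ} [NeZero k] {x : ZMod k} (hx : x ≠ 0) :
    x ∈ Finset.univ.erase (0 : ZMod k) :=
  Finset.mem_erase.mpr ⟨hx, Finset.mem_univ _⟩

lemma key_calc (k : ℕ) [NeZero k] (hk : 2 ≤ k) (x y : ZMod k) (hx : x ≠ 0) (hy : y ≠ 0) :
    (∑ u ∈ Finset.univ.erase (0 : ZMod k), ∑ v ∈ Finset.univ.erase (0 : ZMod k),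
      (if u + v = 0 then (k : ℤ) - 1 else (k : ℤ) - 2) *
        ((if x + v = 0 then (k : ℤ) - 2 else -1) * (if u + y = 0 then (k : ℤ) - 2 else -1)))
    = ((k : ℤ) - 1) * (if x + y = 0 then (k : ℤ) - 2 else -1) := by
  have hinner : ∀ u ∈ Finset.univ.erase (0 : ZMod k),
      (∑ v ∈ Finset.univ.erase (0 : ZMod k),
        (if u + v = 0 then (k : ℤ) - 1 else (k : ℤ) - 2) *
          ((if x + v = 0 then (k : ℤ) - 2 else -1) * (if u + y = 0 then (k : ℤ) - 2 else -1)))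
      = (if u = x then (k : ℤ) - 2 else -1) * (if u + y = 0 then (k : ℤ) - 2 else -1) := by
    intro u hu
    have hu0 : u ≠ 0 := (Finset.mem_erase.mp hu).1
    have hassoc : ∀ v : ZMod k,
        (if u + v = 0 then (k : ℤ) - 1 else (k : ℤ) - 2) *
          ((if x + v = 0 then (k : ℤ) - 2 else -1) * (if u + y = 0 then (k : ℤ) - 2 else -1))
        = ((if u + v = 0 then (k : ℤ) - 1 else (k : ℤ) - 2) *
            (if x + v = 0 then (k : ℤ) - 2 else -1)) * (if u + y = 0 then (k : ℤ) - 2 else -1) := by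
      intro v; ring
    rw [Finset.sum_congr rfl (fun v _ => hassoc v), ← Finset.sum_mul]
    congr 1
    by_cases hux : u = x
    · subst hux
      rw [if_pos rfl]
      have hpt : ∀ v ∈ Finset.univ.erase (0 : ZMod k),
          (if u + v = 0 then (k : ℤ) - 1 else (k : ℤ) - 2) *
            (if u + v = 0 then (k : ℤ) - 2 else -1)
          = if v = -u then ((k : ℤ) - 1) * ((k : ℤ) - 2) else ((k : ℤ) - 2) * (-1) := by
        intro v _
        by_cases hv : v = -u
        · subst hv
          rw [if_pos (add_neg_cancel u), if_pos (add_neg_cancel u), if_pos rfl]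
        · have hne : u + v ≠ 0 := fun hz => hv (by linear_combination hz)
          rw [if_neg hne, if_neg hne, if_neg hv]
      rw [Finset.sum_congr rfl hpt,
        sum_one_special _ _ (mem_E (neg_ne_zero.mpr hu0)), card_erase_zero]
      ring
    · rw [if_neg hux]
      have hneq : (-u : ZMod k) ≠ -x := fun hh => hux (neg_injective hh)
      have hpt : ∀ v ∈ Finset.univ.erase (0 : ZMod k),
          (if u + v = 0 then (k : ℤ) - 1 else (k : ℤ) - 2) *
            (if x + v = 0 then (k : ℤ) - 2 else -1)
          = if v = -u then ((k : ℤ) - 1) * (-1)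
            else if v = -x then ((k : ℤ) - 2) * ((k : ℤ) - 2) else ((k : ℤ) - 2) * (-1) := by
        intro v _
        by_cases h1 : v = -u
        · subst h1
          rw [if_pos (add_neg_cancel u), if_neg (fun hz => hux (by linear_combination -hz)),
            if_pos rfl]
        · by_cases h2 : v = -x
          · subst h2
            rw [if_neg (fun hz => hux (by linear_combination hz)), if_pos (add_neg_cancel x),
              if_neg h1, if_pos rfl]
          · rw [if_neg (fun hz => h1 (by linear_combination hz)),
              if_neg (fun hz => h2 (by linear_combination hz)), if_neg h1, if_neg h2]
      rw [Finset.sum_congr rfl hpt,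
        sum_two_special _ _ _ (mem_E (neg_ne_zero.mpr hu0)) (mem_E (neg_ne_zero.mpr hx)) hneq,
        card_erase_zero]
      ring
  rw [Finset.sum_congr rfl hinner]
  by_cases hxy : x = -y
  · have hx0 : x + y = 0 := by rw [hxy]; ring
    have hpt2 : ∀ u ∈ Finset.univ.erase (0 : ZMod k),
        (if u = x then (k : ℤ) - 2 else -1) * (if u + y = 0 then (k : ℤ) - 2 else -1)
        = if u = x then ((k : ℤ) - 2) * ((k : ℤ) - 2) else 1 := by
      intro u _
      by_cases hu : u = x
      · subst hu; rw [if_pos rfl, if_pos rfl, if_pos (by rw [hxy]; ring)]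
      · rw [if_neg hu, if_neg hu, if_neg (fun hz => hu (by rw [hxy]; linear_combination hz))]
        ring
    rw [Finset.sum_congr rfl hpt2, sum_one_special _ _ (mem_E hx), card_erase_zero,
      if_pos hx0]
    ring
  · have hx0 : x + y ≠ 0 := fun hz => hxy (by linear_combination hz)
    have hpt2 : ∀ u ∈ Finset.univ.erase (0 : ZMod k),
        (if u = x then (k : ℤ) - 2 else -1) * (if u + y = 0 then (k : ℤ) - 2 else -1)
        = if u = x then ((k : ℤ) - 2) * (-1) else if u = -y then (-1) * ((k : ℤ) - 2) else 1 := by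
      intro u _
      by_cases h1 : u = x
      · subst h1; rw [if_pos rfl, if_pos rfl, if_neg hx0]
      · rw [if_neg h1, if_neg h1]
        by_cases h2 : u = -y
        · subst h2; rw [if_pos (neg_add_cancel y), if_pos rfl]
        · rw [if_neg (fun hz => h2 (by linear_combination hz)), if_neg h2]
          ring
    rw [Finset.sum_congr rfl hpt2,
      sum_two_special _ _ _ (mem_E hx) (mem_E (neg_ne_zero.mpr hy)) hxy, card_erase_zero,
      if_neg hx0]
    ring

lemma trace_compatMat (k : ℕ) [NeZero k] (hk : 2 ≤ k) :
    Matrix.trace (compatMat k) = ((k : ℤ) - 2) * ((k : ℤ) - 1) := by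
  have h0 : Matrix.trace (compatMat k)
      = ∑ u ∈ Finset.univ.erase (0 : ZMod k), ∑ v ∈ Finset.univ.erase (0 : ZMod k),
          (if u + v = 0 then (k : ℤ) - 1 else (k : ℤ) - 2) *
            (if u + v = 0 then (k : ℤ) - 2 else -1) :=
    sum_V k hk (fun u v => if u + v = 0 then (k : ℤ) - 2 else -1)
  rw [h0]
  have hinner : ∀ u ∈ Finset.univ.erase (0 : ZMod k),
      (∑ v ∈ Finset.univ.erase (0 : ZMod k),
        (if u + v = 0 then (k : ℤ) - 1 else (k : ℤ) - 2) *
          (if u + v = 0 then (k : ℤ) - 2 else -1)) = (k : ℤ) - 2 := by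
    intro u hu
    have hu0 : u ≠ 0 := (Finset.mem_erase.mp hu).1
    have hpt : ∀ v ∈ Finset.univ.erase (0 : ZMod k),
        (if u + v = 0 then (k : ℤ) - 1 else (k : ℤ) - 2) *
          (if u + v = 0 then (k : ℤ) - 2 else -1)
        = if v = -u then ((k : ℤ) - 1) * ((k : ℤ) - 2) else ((k : ℤ) - 2) * (-1) := by
      intro v _
      by_cases hv : v = -u
      · subst hv; rw [if_pos (add_neg_cancel u), if_pos (add_neg_cancel u), if_pos rfl]
      · have hne : u + v ≠ 0 := fun hz => hv (by linear_combination hz)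
        rw [if_neg hne, if_neg hne, if_neg hv]
    rw [Finset.sum_congr rfl hpt,
      sum_one_special _ _ (mem_E (neg_ne_zero.mpr hu0)), card_erase_zero]
    ring
  rw [Finset.sum_congr rfl hinner, Finset.sum_const, nsmul_eq_mul, card_erase_zero]
  ring

lemma compatMat_mul_self (k : ℕ) [NeZero k] (hk : 2 ≤ k) :
    compatMat k * compatMat k = ((k : ℤ) - 1) • compatMat k := by
  ext ξ ξ''
  have hx : ξ.val.1 ≠ 0 := ξ.prop.1
  have hy : ξ''.val.2.2.1 ≠ 0 := ξ''.prop.2.2.1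
  rw [Matrix.mul_apply]
  have h0 : (∑ ξ' : VertexConfig k, compatMat k ξ ξ' * compatMat k ξ' ξ'')
      = ∑ u ∈ Finset.univ.erase (0 : ZMod k), ∑ v ∈ Finset.univ.erase (0 : ZMod k),
          (if u + v = 0 then (k : ℤ) - 1 else (k : ℤ) - 2) *
            ((if ξ.val.1 + v = 0 then (k : ℤ) - 2 else -1) *
              (if u + ξ''.val.2.2.1 = 0 then (k : ℤ) - 2 else -1)) := by
    exact sum_V k hk (fun u v => (if ξ.val.1 + v = 0 then (k : ℤ) - 2 else -1) *
      (if u + ξ''.val.2.2.1 = 0 then (k : ℤ) - 2 else -1))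
  rw [h0, key_calc k hk _ _ hx hy]
  simp [compatMat, Matrix.smul_apply, smul_eq_mul]


theorem trace_compatMat_pow (k : ℕ) (hk : 2 ≤ k) (i : ℕ) (hi : 1 ≤ i) :
    letI : NeZero k := ⟨by omega⟩
    Matrix.trace ((compatMat k) ^ i) = ((k : ℤ) - 2) * ((k : ℤ) - 1) ^ i := by
  haveI : NeZero k := ⟨by omega⟩
  obtain ⟨n, rfl⟩ : ∃ n, i = n + 1 := ⟨i - 1, by omega⟩
  have hpow : ∀ m : ℕ, compatMat k ^ (m + 1) = (((k : ℤ) - 1) ^ m) • compatMat k := by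
    intro m
    induction m with
    | zero => rw [pow_one, pow_zero, one_smul]
    | succ m ih =>
        rw [pow_succ, ih, smul_mul_assoc, compatMat_mul_self k hk, smul_smul, ← pow_succ]
  show Matrix.trace ((compatMat k) ^ (n + 1)) = ((k : ℤ) - 2) * ((k : ℤ) - 1) ^ (n + 1)
  rw [hpow n, Matrix.trace_smul, trace_compatMat k hk, smul_eq_mul]
  ring
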